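/- arXiv:0912.4116 — 6 statements merged into one kernel-verified Lean document; each statement's English description precedes it below -/
import Mathlib

section
/- The function u ↦ e^{su}/(e^{e^u} + 1), as a function of the complex variable u, is meromorphic on ℂ with simple poles exactly at the points u_{n,m} = ln(π(2n+1)) + iπ(1/2 + m) for n ≥ 0 an integer and m ∈ ℤ, and the residue at u_{n,m} equals -e^{(s-1)u_{n,m}}. -/
open Complex Filter Topology

private lemma exp_pt (n : ℕ) (m : ℤ) :
    Complex.exp ((Real.log (Real.pi * (2 * n + 1)) : ℂ) + Real.pi * (1 / 2 + m) * Complex.I)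
      = ((Real.pi * (2 * n + 1) : ℝ) : ℂ) * ((-1) ^ m * Complex.I) := by
  have hpos : (0:ℝ) < Real.pi * (2 * n + 1) := by positivity
  have h1 : Complex.exp ((Real.log (Real.pi * (2 * n + 1)) : ℂ))
      = ((Real.pi * (2 * n + 1) : ℝ) : ℂ) := by
    rw [← Complex.ofReal_exp, Real.exp_log hpos]
  have h2 : ((Real.pi : ℂ) * (1 / 2 + m) * Complex.I)
      = (Real.pi / 2 : ℂ) * Complex.I + (m : ℂ) * ((Real.pi : ℂ) * Complex.I) := by ring
  rw [Complex.exp_add, h1, h2, Complex.exp_add, Complex.exp_int_mul, Complex.exp_pi_mul_I]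
  have h3 : Complex.exp ((Real.pi / 2 : ℂ) * Complex.I) = Complex.I := by
    rw [Complex.exp_mul_I, Complex.cos_pi_div_two, Complex.sin_pi_div_two]; ring
  rw [h3]; ring

private lemma exp_odd (k : ℤ) (hk : Odd k) :
    Complex.exp ((k : ℂ) * ((Real.pi : ℂ) * Complex.I)) = -1 := by
  rw [Complex.exp_int_mul, Complex.exp_pi_mul_I]
  exact hk.neg_one_zpow

private lemma exp_exp_pt (n : ℕ) (m : ℤ) :
    Complex.exp (Complex.exp ((Real.log (Real.pi * (2 * n + 1)) : ℂ)
      + Real.pi * (1 / 2 + m) * Complex.I)) = -1 := by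
  rw [exp_pt]
  rcases Int.even_or_odd m with h | h
  · have h1 : ((-1 : ℂ)) ^ m = 1 := h.neg_one_zpow
    have hk : ((Real.pi * (2 * n + 1) : ℝ) : ℂ) * ((-1) ^ m * Complex.I)
        = ((2 * (n:ℤ) + 1 : ℤ) : ℂ) * ((Real.pi : ℂ) * Complex.I) := by
      rw [h1]; push_cast; ring
    rw [hk]; exact exp_odd _ ⟨n, by ring⟩
  · have h1 : ((-1 : ℂ)) ^ m = -1 := h.neg_one_zpow
    have hk : ((Real.pi * (2 * n + 1) : ℝ) : ℂ) * ((-1) ^ m * Complex.I)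
        = ((-(2 * (n:ℤ) + 1) : ℤ) : ℂ) * ((Real.pi : ℂ) * Complex.I) := by
      rw [h1]; push_cast; ring
    rw [hk]; exact exp_odd _ ⟨-(n+1), by ring⟩

theorem stmt_3 (s : ℂ)
    (f : ℂ → ℂ) (hf : f = fun u => Complex.exp (s * u) / (Complex.exp (Complex.exp u) + 1))
    (S : Set ℂ)
    (hS : S = {u : ℂ | ∃ n : ℕ, ∃ m : ℤ,
      u = (Real.log (Real.pi * (2 * n + 1)) : ℂ) + Real.pi * (1 / 2 + m) * Complex.I}) :
    (∀ u ∉ S, AnalyticAt ℂ f u) ∧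
    (∀ u ∈ S, Tendsto (fun z => (z - u) * f z) (𝓝[≠] u)
      (𝓝 (-Complex.exp ((s - 1) * u)))) := by
  constructor
  · -- analyticity away from S
    intro u hu
    have hne : Complex.exp (Complex.exp u) + 1 ≠ 0 := by
      intro h0
      apply hu
      have hm1 : Complex.exp (Complex.exp u) = -1 := by linear_combination h0
      rw [← Complex.exp_pi_mul_I] at hm1
      obtain ⟨j, hj⟩ := Complex.exp_eq_exp_iff_exists_int.mp hm1
      -- exp u = (2j+1) * π * I
      rw [hS]
      -- find n, m₀ with exp u = exp (pt n m₀)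
      have key : ∃ (n : ℕ) (m₀ : ℤ), Complex.exp u =
          Complex.exp ((Real.log (Real.pi * (2 * n + 1)) : ℂ)
            + Real.pi * (1 / 2 + m₀) * Complex.I) := by
        rcases le_or_gt 0 j with hjn | hjn
        · refine ⟨j.toNat, 0, ?_⟩
          rw [exp_pt, hj]
          have : ((j.toNat : ℕ) : ℂ) = (j : ℂ) := by
            exact_mod_cast congrArg (Int.cast : ℤ → ℂ) (Int.toNat_of_nonneg hjn)
          push_cast
          rw [this]; ring
        · refine ⟨(-(j+1)).toNat, 1, ?_⟩
          rw [exp_pt, hj]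
          have : (((-(j+1)).toNat : ℕ) : ℂ) = -(j : ℂ) - 1 := by
            have h1 : ((-(j+1)).toNat : ℤ) = -(j+1) := Int.toNat_of_nonneg (by omega)
            have := congrArg (Int.cast : ℤ → ℂ) h1
            push_cast at this ⊢
            rw [this]; ring
          push_cast
          rw [this]; ring
      obtain ⟨n, m₀, hkey⟩ := key
      obtain ⟨l, hl⟩ := Complex.exp_eq_exp_iff_exists_int.mp hkey
      refine ⟨n, m₀ + 2 * l, ?_⟩
      rw [hl]; push_cast; ring
    rw [hf]
    exact AnalyticAt.div
      (analyticAt_cexp.comp ((analyticAt_const.mul analyticAt_id)))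
      ((analyticAt_cexp.comp analyticAt_cexp).add analyticAt_const) hne
  · -- residues
    intro u hu
    have hval : Complex.exp (Complex.exp u) = -1 := by
      rw [hS] at hu
      obtain ⟨n, m, rfl⟩ := hu
      exact exp_exp_pt n m
    set h : ℂ → ℂ := fun z => Complex.exp (Complex.exp z) + 1 with hh
    have hu0 : h u = 0 := by simp [hh, hval]
    have hd : HasDerivAt h (Complex.exp (Complex.exp u) * Complex.exp u) u := by
      simpa [hh] using ((Complex.hasDerivAt_exp (Complex.exp u)).comp u
        (Complex.hasDerivAt_exp u)).add_const 1
    have hd' : Complex.exp (Complex.exp u) * Complex.exp u = -Complex.exp u := by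
      rw [hval]; ring
    rw [hd'] at hd
    have hslope := hasDerivAt_iff_tendsto_slope.mp hd
    have hne : (-Complex.exp u) ≠ 0 := by simp [Complex.exp_ne_zero]
    have hinv : Tendsto (fun z => (slope h u z)⁻¹) (𝓝[≠] u) (𝓝 (-Complex.exp u)⁻¹) :=
      hslope.inv₀ hne
    have hexp : Tendsto (fun z => Complex.exp (s * z)) (𝓝[≠] u)
        (𝓝 (Complex.exp (s * u))) :=
      ((Complex.continuous_exp.comp (continuous_const.mul continuous_id)).continuousAt).continuousWithinAt.tendsto
    have hmul := hexp.mul hinv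
    have heq : ∀ z ∈ ({u}ᶜ : Set ℂ), Complex.exp (s * z) * (slope h u z)⁻¹
        = (z - u) * f z := by
      intro z hz
      have hzu : z - u ≠ 0 := sub_ne_zero.mpr hz
      rw [hf, slope_def_field, hu0, sub_zero, div_eq_mul_inv (h z), mul_inv,
        inv_inv]
      simp only [hh]
      field_simp
    have hlim : Complex.exp (s * u) * (-Complex.exp u)⁻¹ = -Complex.exp ((s - 1) * u) := by
      rw [show (s-1)*u = s*u - u by ring, Complex.exp_sub]
      field_simp
    rw [← hlim]
    exact hmul.congr' (eventually_nhdsWithin_of_forall heq)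
end

section
/- For every positive integer N, every s ∈ ℂ, and every ỹ ∈ [0, π/2], the modulus |e^{2πN(sin ỹ - i cos ỹ)} + 1| ≥ (1/2)·e^{2πN sin ỹ}. -/
set_option maxHeartbeats 1000000 in
theorem stmt_6 (N : ℕ) (hN : 0 < N) (s : ℂ) (y : ℝ) (hy0 : 0 ≤ y) (hy1 : y ≤ Real.pi / 2) :
    (1 / 2) * Real.exp (2 * Real.pi * N * Real.sin y) ≤
      ‖Complex.exp ((2 * Real.pi * N : ℝ) * ((Real.sin y : ℂ) - Complex.I * Real.cos y)) + 1‖ := by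
  have hpi := Real.pi_gt_three
  have hN1 : (1:ℝ) ≤ N := by exact_mod_cast hN
  set c : ℝ := 2 * Real.pi * N with hc
  have hc0 : 0 < c := by rw [hc]; positivity
  set θ : ℝ := c * Real.cos y with hθdef
  set a : ℝ := Real.exp (c * Real.sin y) with ha
  clear_value c θ a
  have ha0 : 0 < a := by rw [ha]; exact Real.exp_pos _
  have hsin0 : 0 ≤ Real.sin y := Real.sin_nonneg_of_nonneg_of_le_pi hy0 (by linarith)
  have hcos0 : 0 ≤ Real.cos y := Real.cos_nonneg_of_mem_Icc ⟨by linarith, hy1⟩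
  have hcos1 : Real.cos y ≤ 1 := Real.cos_le_one y
  have hw : Complex.exp ((c : ℂ) * ((Real.sin y : ℂ) - Complex.I * Real.cos y)) + 1
      = Complex.mk (a * Real.cos θ + 1) (-(a * Real.sin θ)) := by
    apply Complex.ext <;>
      simp [Complex.exp_re, Complex.exp_im, Complex.add_re, Complex.add_im, ha, hθdef,
        Complex.cos_ofReal_re, Complex.sin_ofReal_re, Real.cos_neg, Real.sin_neg, mul_comm]
  rw [hw]
  have hnormsq : ‖Complex.mk (a * Real.cos θ + 1) (-(a * Real.sin θ))‖
      = Real.sqrt (a^2 + 2*a*Real.cos θ + 1) := by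
    rw [Complex.norm_def, Complex.normSq_mk]
    congr 1
    have := Real.sin_sq_add_cos_sq θ
    nlinarith
  have hpos : (0:ℝ) ≤ a^2 + 2*a*Real.cos θ + 1 := by
    nlinarith [Real.neg_one_le_cos θ, sq_nonneg (a-1)]
  rw [hnormsq, show (1:ℝ)/2 * a = a/2 by ring, Real.le_sqrt (by positivity)]
  have hθc : θ ≤ c := by rw [hθdef]; nlinarith
  have hθ0 : 0 ≤ θ := by rw [hθdef, hc]; positivity
  have hcs' : c * Real.sin y ≤ c * Real.sin y := le_refl _
  have hcossin := Real.sin_sq_add_cos_sq y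
  have key : (a/2)^2 ≤ a^2 + 2*a*Real.cos θ + 1 := by
    rcases le_or_gt 0 (Real.cos θ) with h | h
    · nlinarith
    · -- cos θ < 0 : show a ≥ 2
      have hθle : θ ≤ c - Real.pi/2 := by
        by_contra h'
        push_neg at h'
        have : 0 < Real.cos θ := by
          have heq : Real.cos θ = Real.cos (θ - (N:ℤ) * (2*Real.pi)) :=
            (Real.cos_sub_int_mul_two_pi θ N).symm
          rw [heq]
          apply Real.cos_pos_of_mem_Ioo
          constructor
          · push_cast
            rw [hc] at h'; linarith
          · push_cast
            rw [hc] at hθc; linarith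
        linarith
      -- from hθle : c * cos y ≤ c - π/2, get 2N cos y ≤ 2N - 1/2
      have h1 : (2*(N:ℝ)) * Real.cos y ≤ 2*N - 1/2 := by
        have h2 : Real.pi * ((2*(N:ℝ)) * Real.cos y) ≤ Real.pi * (2*N - 1/2) := by
          rw [hθdef, hc] at hθle; ring_nf at hθle ⊢; linarith
        exact le_of_mul_le_mul_left h2 (by linarith)
      -- sin y ^ 2 ≥ 1/(4N), as 1 ≤ 4N sin²y
      have h2 : 1 ≤ 4*(N:ℝ)*Real.sin y^2 := by
        nlinarith [sq_nonneg (Real.cos y), sq_nonneg (2*(N:ℝ)*(1 - Real.cos y))]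
      have ht0 : 0 ≤ c * Real.sin y := by rw [hc]; positivity
      have ht2 : 9 ≤ (c * Real.sin y)^2 := by
        have h3 : Real.pi^2 * N * 1 ≤ Real.pi^2 * N * (4*(N:ℝ)*Real.sin y^2) :=
          mul_le_mul_of_nonneg_left h2 (by positivity)
        have hpi2 : 9 ≤ Real.pi^2 := by nlinarith
        have h4 : (9:ℝ) ≤ Real.pi^2 * N := by nlinarith [mul_le_mul_of_nonneg_left hN1 (le_of_lt (by positivity : (0:ℝ) < Real.pi^2))]
        calc (9:ℝ) ≤ Real.pi^2 * N := h4
          _ = Real.pi^2 * N * 1 := by ring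
          _ ≤ Real.pi^2 * N * (4*(N:ℝ)*Real.sin y^2) := h3
          _ = (2 * Real.pi * N * Real.sin y)^2 := by ring
          _ = (c * Real.sin y)^2 := by rw [hc]
      have hcs : 1 ≤ c * Real.sin y := by nlinarith [ht0, ht2]
      have ha2 : 2 ≤ a := by
        calc (2:ℝ) = 1 + 1 := by ring
        _ ≤ Real.exp 1 := by linarith [Real.add_one_le_exp 1]
        _ ≤ a := by rw [ha]; exact Real.exp_le_exp.2 hcs
      nlinarith [Real.neg_one_le_cos θ]
  · linarith
  · exact hpos
end

section
/- For complex s with Re(s) < 0 and real a with 0 < a ≤ 1, one has the Hurwitz formula ζ(s, a) = 2·Γ(1-s)·(2π)^{s-1}·Σ_{n=1}^{∞} n^{s-1}·sin(2πna + πs/2). -/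
open Complex Real

set_option maxHeartbeats 1000000

theorem stmt_12 (s : ℂ) (hs : s.re < 0) (a : ℝ) (ha : 0 < a) (ha' : a ≤ 1) :
    HurwitzZeta.hurwitzZeta (a : UnitAddCircle) s =
      2 * Complex.Gamma (1 - s) * (2 * Real.pi : ℂ) ^ (s - 1) *
        ∑' n : ℕ, ((n : ℂ) + 1) ^ (s - 1) *
          Complex.sin (2 * Real.pi * ((n : ℂ) + 1) * a + Real.pi * s / 2) := by
  obtain ⟨s', hs'def⟩ : ∃ s' : ℂ, s' = 1 - s := ⟨_, rfl⟩
  have hre : 1 < s'.re := by simp [hs'def]; linarith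
  have hne0 : s' ≠ 0 := fun h => by rw [h] at hre; norm_num at hre
  have h1 : HurwitzZeta.hurwitzZeta (a : UnitAddCircle) s
      = (2 * π : ℂ) ^ (-s') * Complex.Gamma s' *
        (cexp (-π * I * s' / 2) * HurwitzZeta.expZeta (a : UnitAddCircle) s' +
         cexp (π * I * s' / 2) * HurwitzZeta.expZeta (-(a : UnitAddCircle)) s') := by
    have := HurwitzZeta.hurwitzZeta_one_sub (a : UnitAddCircle) (s := s')
      (fun n => by
        intro h
        have : s'.re = -(n : ℝ) := by rw [h]; simp
        rw [this] at hre; have : (0:ℝ) ≤ n := n.cast_nonneg; linarith)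
      (Or.inr (fun h => by rw [h] at hre; norm_num at hre))
    simpa [hs'def] using this
  -- sums
  have hE1 := HurwitzZeta.hasSum_expZeta_of_one_lt_re a hre
  have hE2 := HurwitzZeta.hasSum_expZeta_of_one_lt_re (-a) hre
  have hcoe : ((-a : ℝ) : UnitAddCircle) = -(a : UnitAddCircle) := by rfl
  rw [hcoe] at hE2
  have hsum := (hE1.mul_left (cexp (-↑π * I * s' / 2))).add
      (hE2.mul_left (cexp (↑π * I * s' / 2)))
  -- shift the sum by one
  have hshift := (hasSum_nat_add_iff' 1).mpr hsum
  simp only [Finset.sum_range_one, Nat.cast_zero, mul_zero, Complex.zero_cpow hne0,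
    div_zero, add_zero, sub_zero] at hshift
  have hsum' : HasSum (fun n : ℕ => 2 * (((n : ℂ) + 1) ^ (s - 1) *
      Complex.sin (2 * Real.pi * ((n : ℂ) + 1) * a + Real.pi * s / 2)))
      (cexp (-↑π * I * s' / 2) * HurwitzZeta.expZeta (a : UnitAddCircle) s' +
       cexp (↑π * I * s' / 2) * HurwitzZeta.expZeta (-(a : UnitAddCircle)) s') := by
    convert hshift using 2 with n
    · rfl
    have hn1 : ((n:ℂ) + 1) ≠ 0 := Nat.cast_add_one_ne_zero n
    have hpow : ((n : ℂ) + 1) ^ (s - 1) = 1 / ((n:ℂ)+1) ^ s' := by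
      rw [hs'def, show s - 1 = -(1 - s) by ring, Complex.cpow_neg, one_div]
    push_cast
    rw [hpow]
    rw [Complex.sin]
    have hI : cexp (↑π/2 * I) = I := by
      rw [Complex.exp_mul_I]
      norm_cast
      simp [Complex.cos_pi_div_two, Complex.sin_pi_div_two]
    have he : cexp (-↑π * I * s' / 2) = -I * cexp (Real.pi * s / 2 * I) := by
      rw [hs'def, show -↑π * I * (1 - s)/2 = (↑Real.pi * s / 2 * I) + (-(↑π/2) * I) by push_cast; ring,
        Complex.exp_add]
      rw [show (-(↑π/2) * I : ℂ) = -(↑π/2 * I) by ring, Complex.exp_neg, hI, Complex.inv_I]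
      ring
    have he' : cexp (↑π * I * s' / 2) = I * cexp (-(Real.pi * s / 2 * I)) := by
      rw [hs'def, show ↑π * I * (1 - s)/2 = -(↑Real.pi * s / 2 * I) + (↑π/2 * I) by push_cast; ring,
        Complex.exp_add, hI]
      ring
    rw [he, he',
      show (2 * ↑π * I * ↑a * ((n:ℂ)+1) : ℂ) = (2 * ↑Real.pi * ((n:ℂ) + 1) * ↑a) * I by push_cast; ring,
      show (2 * ↑π * I * (-↑a) * ((n:ℂ)+1) : ℂ) = -((2 * ↑Real.pi * ((n:ℂ) + 1) * ↑a) * I) by push_cast; ring]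
    set z : ℂ := 2 * ↑Real.pi * ((n:ℂ) + 1) * ↑a
    set w : ℂ := ↑Real.pi * s / 2
    rw [show -(z + w) * I = -(z*I) + -(w*I) by ring, show (z + w) * I = z*I + w*I by ring,
      Complex.exp_add, Complex.exp_add]
    ring
  rw [h1, ← hsum'.tsum_eq, tsum_mul_left, hs'def, show -(1 - s) = s - 1 by ring]
  ring
end

section
/- For complex s with Re(s) > 0 and real x > 0, the lower incomplete gamma function satisfies γ(s, x) = (x^s / sin(πs)) · ∫_0^π e^{x cos θ} · cos(sθ + x sin θ) dθ, provided s is not an integer. -/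
open Complex intervalIntegral MeasureTheory Real Set Filter Metric
open scoped Topology

noncomputable def gg (s : ℂ) (x θ : ℝ) : ℂ :=
  Complex.exp (x * Complex.exp (θ * I) + s * θ * I)

lemma hasDerivAt_gg_x (s : ℂ) (θ : ℝ) (x : ℝ) :
    HasDerivAt (fun y : ℝ => gg s y θ) (Complex.exp (θ * I) * gg s x θ) x := by
  have h1 : HasDerivAt (fun y : ℝ => (y : ℂ)) 1 x := (hasDerivAt_id x).ofReal_comp
  have h2 : HasDerivAt (fun y : ℝ => (y : ℂ) * Complex.exp (θ * I) + s * θ * I)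
      (Complex.exp (θ * I)) x := by
    simpa using (h1.mul_const (Complex.exp (θ * I))).add_const (s * θ * I)
  simpa [gg, mul_comm] using h2.cexp

lemma hasDerivAt_gg_theta (s : ℂ) (x : ℝ) (θ : ℝ) :
    HasDerivAt (gg s x) ((x * Complex.exp (θ * I) * I + s * I) * gg s x θ) θ := by
  have hc : HasDerivAt (fun y : ℝ => Complex.exp (y * I)) (Complex.exp (θ * I) * I) θ := by
    have : HasDerivAt (fun z : ℂ => Complex.exp (z * I)) (Complex.exp (θ * I) * I) (θ : ℂ) := by
      simpa using ((hasDerivAt_id (θ : ℂ)).mul_const I).cexp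
    exact this.comp_ofReal
  have h1 : HasDerivAt (fun y : ℝ => (x : ℂ) * Complex.exp (y * I) + s * y * I)
      ((x : ℂ) * (Complex.exp (θ * I) * I) + s * I) θ := by
    have h2 : HasDerivAt (fun y : ℝ => s * y * I) (s * I) θ := by
      have := ((hasDerivAt_id θ).ofReal_comp.const_mul s).mul_const I
      simpa [mul_comm, mul_assoc, mul_left_comm] using this
    exact (hc.const_mul (x : ℂ)).add h2
  have h3 := h1.cexp
  have : (x * Complex.exp (θ * I) * I + s * I) * gg s x θ
      = Complex.exp (↑x * Complex.exp (↑θ * I) + s * ↑θ * I) * (↑x * (Complex.exp (↑θ * I) * I) + s * I) := by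
    unfold gg; ring
  rw [this]
  exact h3

lemma norm_gg (s : ℂ) (x θ : ℝ) : ‖gg s x θ‖ = Real.exp (x * Real.cos θ - s.im * θ) := by
  simp only [gg, Complex.norm_exp]
  congr 1
  simp [Complex.exp_ofReal_mul_I_re, Complex.add_re, Complex.mul_re, Complex.mul_im,
    Complex.I_re, Complex.I_im]
  ring_nf

lemma continuous_gg (s : ℂ) : Continuous fun p : ℝ × ℝ => gg s p.1 p.2 := by
  unfold gg
  fun_prop

lemma continuous_gg_theta (s : ℂ) (x : ℝ) : Continuous (gg s x) := by
  unfold gg; fun_prop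


lemma gg_boundary (s : ℂ) (x : ℝ) :
    gg s x π - gg s x (-π) = 2 * I * Real.exp (-x) * Complex.sin (π * s) := by
  have h1 : gg s x π = Complex.exp (-x) * Complex.exp (s * π * I) := by
    rw [gg, Complex.exp_add]
    norm_num [Complex.exp_pi_mul_I]
  have h2 : gg s x (-π) = Complex.exp (-x) * Complex.exp (-(s * π * I)) := by
    rw [gg, Complex.exp_add]
    push_cast
    rw [neg_mul, Complex.exp_neg, Complex.exp_pi_mul_I]
    norm_num
  rw [h1, h2, Complex.sin]
  push_cast
  have hI : (I : ℂ) * I = -1 := Complex.I_mul_I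
  field_simp
  ring_nf
  rw [Complex.I_sq]
  ring


noncomputable def JJ (s : ℂ) (x : ℝ) : ℂ := ∫ θ in (-π)..π, gg s x θ
noncomputable def JJ' (s : ℂ) (x : ℝ) : ℂ := ∫ θ in (-π)..π, Complex.exp (θ * I) * gg s x θ

lemma hasDerivAt_JJ (s : ℂ) (x₀ : ℝ) : HasDerivAt (JJ s) (JJ' s x₀) x₀ := by
  have hcont : ∀ x : ℝ, Continuous (fun θ : ℝ => Complex.exp (θ * I) * gg s x θ) := by
    intro x
    have := continuous_gg_theta s x
    fun_prop
  have key := intervalIntegral.hasDerivAt_integral_of_dominated_loc_of_deriv_le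
    (F := fun x θ => gg s x θ) (F' := fun x θ => Complex.exp (θ * I) * gg s x θ)
    (a := -π) (b := π) (x₀ := x₀) (μ := volume)
    (bound := fun _ => Real.exp (|x₀| + 1 + |s.im| * π))
    (ball_mem_nhds x₀ one_pos)
    (Eventually.of_forall fun x => (continuous_gg_theta s x).aestronglyMeasurable)
    ((continuous_gg_theta s x₀).intervalIntegrable _ _)
    ((hcont x₀).aestronglyMeasurable)
    ?_ (intervalIntegrable_const) ?_
  · exact key.2
  · refine Eventually.of_forall fun θ hθ x hx => ?_
    have h1 : ‖Complex.exp (↑θ * I)‖ = 1 := by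
      simp [Complex.norm_exp]
    rw [norm_mul, h1, one_mul, norm_gg]
    apply Real.exp_le_exp.2
    have hθ' : |θ| ≤ π := by
      rw [Set.uIoc_of_le (by linarith [Real.pi_pos] : -π ≤ π)] at hθ
      rw [abs_le]; constructor <;> [linarith [hθ.1]; exact hθ.2]
    have hx' : |x| ≤ |x₀| + 1 := by
      rw [mem_ball, Real.dist_eq] at hx
      calc |x| = |x₀ + (x - x₀)| := by ring_nf
        _ ≤ |x₀| + |x - x₀| := abs_add_le _ _
        _ ≤ |x₀| + 1 := by linarith
    have c1 : x * Real.cos θ ≤ |x₀| + 1 := by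
      calc x * Real.cos θ ≤ |x * Real.cos θ| := le_abs_self _
        _ = |x| * |Real.cos θ| := abs_mul _ _
        _ ≤ (|x₀| + 1) * 1 := by
            apply mul_le_mul hx' (Real.abs_cos_le_one θ) (abs_nonneg _) (by positivity)
        _ = |x₀| + 1 := mul_one _
    have c2 : -(s.im * θ) ≤ |s.im| * π := by
      calc -(s.im * θ) ≤ |s.im * θ| := neg_le_abs _
        _ = |s.im| * |θ| := abs_mul _ _
        _ ≤ |s.im| * π := by
            apply mul_le_mul_of_nonneg_left hθ' (abs_nonneg _)
    linarith
  · exact Eventually.of_forall fun θ _ x _ => hasDerivAt_gg_x s θ x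

lemma key_theta (s : ℂ) (x : ℝ) :
    (x : ℂ) * JJ' s x + s * JJ s x = 2 * Real.exp (-x) * Complex.sin (π * s) := by
  have hint : ∀ x : ℝ, ∫ θ in (-π)..π, (↑x * Complex.exp (↑θ * I) * I + s * I) * gg s x θ
      = 2 * I * Real.exp (-x) * Complex.sin (π * s) := by
    intro x
    rw [← gg_boundary s x]
    refine integral_eq_sub_of_hasDerivAt (fun θ _ => hasDerivAt_gg_theta s x θ) ?_
    apply Continuous.intervalIntegrable
    have := continuous_gg_theta s x
    fun_prop
  have h2 : ∫ θ in (-π)..π, (↑x * Complex.exp (↑θ * I) * I + s * I) * gg s x θ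
      = (x : ℂ) * I * JJ' s x + s * I * JJ s x := by
    rw [JJ, JJ', ← intervalIntegral.integral_const_mul, ← intervalIntegral.integral_const_mul,
      ← intervalIntegral.integral_add]
    · congr 1; ext θ; ring
    · apply Continuous.intervalIntegrable
      have := continuous_gg_theta s x
      fun_prop
    · apply Continuous.intervalIntegrable
      exact continuous_const.mul (continuous_gg_theta s x)
  have h3 := (hint x).symm.trans h2
  have hI : (I : ℂ) ≠ 0 := Complex.I_ne_zero
  push_cast [Complex.ofReal_exp] at h3 ⊢
  linear_combination I * h3 + (↑x * JJ' s x + s * JJ s x - 2 * Complex.exp (-↑x) * Complex.sin (↑π * s)) * Complex.I_mul_I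

lemma integral_eq_JJ (s : ℂ) (x : ℝ) :
    (∫ θ in (0:ℝ)..π, (Real.exp (x * Real.cos θ) : ℂ) * Complex.cos (s * θ + x * Real.sin θ))
      = (1/2 : ℂ) * JJ s x := by
  have hptwise : ∀ θ : ℝ, (Real.exp (x * Real.cos θ) : ℂ) * Complex.cos (s * θ + x * Real.sin θ)
      = (gg s x θ + gg s x (-θ)) / 2 := by
    intro θ
    have g1 : gg s x θ
        = Complex.exp (↑(x * Real.cos θ) + (s * ↑θ + ↑x * ↑(Real.sin θ)) * I) := by
      rw [gg]
      congr 1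
      rw [Complex.exp_mul_I, ← Complex.ofReal_cos, ← Complex.ofReal_sin]
      push_cast
      ring
    have g2 : gg s x (-θ)
        = Complex.exp (↑(x * Real.cos θ) - (s * ↑θ + ↑x * ↑(Real.sin θ)) * I) := by
      rw [gg]
      congr 1
      rw [Complex.exp_mul_I, ← Complex.ofReal_cos, ← Complex.ofReal_sin]
      push_cast [Real.cos_neg, Real.sin_neg]
      ring
    rw [Complex.ofReal_exp, Complex.cos, g1, g2, ← mul_div_assoc, mul_add,
      ← Complex.exp_add, ← Complex.exp_add, neg_mul, sub_eq_add_neg]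
  have hi2 : IntervalIntegrable (fun θ : ℝ => gg s x (-θ)) volume 0 π :=
    ((continuous_gg_theta s x).comp continuous_neg).intervalIntegrable _ _
  simp_rw [hptwise]
  rw [intervalIntegral.integral_div]
  rw [intervalIntegral.integral_add ((continuous_gg_theta s x).intervalIntegrable _ _)
    hi2]
  have hneg : (∫ θ in (0:ℝ)..π, gg s x (-θ)) = ∫ θ in (-π)..(0:ℝ), gg s x θ := by
    rw [intervalIntegral.integral_comp_neg (a := (0:ℝ)) (b := π) (f := gg s x), neg_zero]
  rw [hneg, JJ]
  rw [← intervalIntegral.integral_add_adjacent_intervals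
    ((continuous_gg_theta s x).intervalIntegrable (-π) 0)
    ((continuous_gg_theta s x).intervalIntegrable 0 π)]
  ring

lemma pg_integrand_contAt (s : ℂ) {t : ℝ} (ht : t ≠ 0) :
    ContinuousAt (fun t : ℝ => (Real.exp (-t) : ℂ) * (t : ℂ) ^ (s - 1)) t := by
  exact ((Complex.continuous_ofReal.comp (Real.continuous_exp.comp continuous_neg)).continuousAt).mul
    (Complex.continuousAt_ofReal_cpow_const t (s - 1) (Or.inr ht))

lemma pg_integrand_intervalIntegrable (s : ℂ) (hs : 0 < s.re) {y : ℝ} (hy : 0 < y) :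
    IntervalIntegrable (fun t : ℝ => (Real.exp (-t) : ℂ) * (t : ℂ) ^ (s - 1)) volume 0 y := by
  rw [intervalIntegrable_iff_integrableOn_Ioc_of_le hy.le]
  exact (Complex.GammaIntegral_convergent hs).mono_set Ioc_subset_Ioi_self

lemma hasDerivAt_partialGamma (s : ℂ) (hs : 0 < s.re) {y : ℝ} (hy : 0 < y) :
    HasDerivAt (Complex.partialGamma s) ((Real.exp (-y) : ℂ) * (y : ℂ) ^ (s - 1)) y := by
  have : Complex.partialGamma s
      = fun u : ℝ => ∫ t in (0:ℝ)..u, (Real.exp (-t) : ℂ) * (t : ℂ) ^ (s - 1) := rfl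
  rw [this]
  refine intervalIntegral.integral_hasDerivAt_right (pg_integrand_intervalIntegrable s hs hy)
    ⟨Set.Ioi (y/2), Ioi_mem_nhds (by linarith), ?_⟩ (pg_integrand_contAt s hy.ne')
  refine ContinuousOn.aestronglyMeasurable (fun t ht => ?_) measurableSet_Ioi
  exact (pg_integrand_contAt s (by simp at ht; nlinarith : t ≠ 0)).continuousWithinAt

lemma tendsto_rpow_zero (p : ℝ) (hp : 0 < p) :
    Tendsto (fun ε : ℝ => ε ^ p) (nhdsWithin 0 (Set.Ioi 0)) (nhds 0) := by
  have := (Real.continuousAt_rpow_const 0 p (Or.inr hp.le)).tendsto.mono_left (nhdsWithin_le_nhds : nhdsWithin (0:ℝ) (Set.Ioi 0) ≤ nhds 0)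
  simpa [Real.zero_rpow hp.ne'] using this

lemma tendsto_partialGamma_zero (s : ℂ) (hs : 0 < s.re) :
    Tendsto (Complex.partialGamma s) (nhdsWithin 0 (Set.Ioi 0)) (nhds 0) := by
  apply squeeze_zero_norm' (a := fun ε => |ε ^ s.re / s.re|)
  · filter_upwards [self_mem_nhdsWithin] with ε (hε : 0 < ε)
    have hb : ∀ᵐ t ∂(volume.restrict (Set.uIoc 0 ε)),
        ‖(Real.exp (-t) : ℂ) * (t : ℂ) ^ (s - 1)‖ ≤ t ^ (s.re - 1) := by
      rw [Set.uIoc_of_le hε.le]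
      filter_upwards [ae_restrict_mem measurableSet_Ioc] with t ht
      rw [norm_mul, Complex.norm_real, Real.norm_eq_abs,
        abs_of_pos (Real.exp_pos _), Complex.norm_cpow_eq_rpow_re_of_pos ht.1]
      simp only [Complex.sub_re, Complex.one_re]
      calc Real.exp (-t) * t ^ (s.re - 1) ≤ 1 * t ^ (s.re - 1) := by
            apply mul_le_mul_of_nonneg_right (Real.exp_le_one_iff.2 (by linarith [ht.1]))
              (Real.rpow_nonneg ht.1.le _)
        _ = t ^ (s.re - 1) := one_mul _
    have := intervalIntegral.norm_integral_le_abs_of_norm_le hb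
      (intervalIntegrable_rpow' (by linarith : (-1:ℝ) < s.re - 1))
    rw [integral_rpow (Or.inl (by linarith))] at this
    simpa [Real.zero_rpow hs.ne', Complex.partialGamma] using this
  · have := (tendsto_rpow_zero s.re hs).div_const s.re
    simpa using this.abs

theorem stmt_13 (s : ℂ) (hs : 0 < s.re) (x : ℝ) (hx : 0 < x) (hsi : ∀ n : ℤ, s ≠ n) :
    Complex.partialGamma s x =
      (x : ℂ) ^ s / Complex.sin (Real.pi * s) *
        ∫ θ in (0:ℝ)..Real.pi,
          Real.exp (x * Real.cos θ) * Complex.cos (s * θ + x * Real.sin θ) := by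
  have hπ : (Real.pi : ℂ) ≠ 0 := Complex.ofReal_ne_zero.mpr Real.pi_ne_zero
  have hs0 : s ≠ 0 := by simpa using hsi 0
  have hsin : Complex.sin (Real.pi * s) ≠ 0 := by
    rw [Ne, Complex.sin_eq_zero_iff]
    rintro ⟨k, hk⟩
    exact hsi k (mul_left_cancel₀ hπ (hk.trans (mul_comm (k : ℂ) (Real.pi : ℂ))))
  rw [integral_eq_JJ s x]
  -- the key claim
  set D : ℝ → ℂ := fun y =>
    Complex.sin (Real.pi * s) * Complex.partialGamma s y - (y:ℂ) ^ s * ((1/2 : ℂ) * JJ s y)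
    with hDdef
  have hD : ∀ y : ℝ, 0 < y → HasDerivAt D 0 y := by
    intro y hy
    have hy0 : (y : ℂ) ≠ 0 := Complex.ofReal_ne_zero.mpr hy.ne'
    have hpg := hasDerivAt_partialGamma s hs hy
    have hr : s - 1 ≠ -1 := by intro h; exact hs0 (by linear_combination h)
    have hpow0 := hasDerivAt_ofReal_cpow_const' hy.ne' hr
    rw [sub_add_cancel] at hpow0
    have hpow := hpow0.const_mul s
    have heq : (fun u : ℝ => s * ((u:ℂ) ^ s / s)) = fun u : ℝ => (u:ℂ) ^ s :=
      funext fun u => by field_simp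
    rw [heq] at hpow
    have hJ := (hasDerivAt_JJ s y).const_mul (1/2 : ℂ)
    have hG := hpow.mul hJ
    have hF := (hpg.const_mul (Complex.sin (Real.pi * s))).sub hG
    have hval : Complex.sin (Real.pi * s) * ((Real.exp (-y) : ℂ) * (y:ℂ) ^ (s-1))
        - (s * (y:ℂ) ^ (s-1) * ((1/2 : ℂ) * JJ s y) + (y:ℂ) ^ s * ((1/2 : ℂ) * JJ' s y)) = 0 := by
      have hk := key_theta s y
      have hys : ((y:ℝ) : ℂ) ^ s = (y:ℂ) ^ (s-1) * (y:ℂ) := by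
        conv_lhs => rw [show s = s - 1 + 1 by ring]
        rw [Complex.cpow_add _ _ hy0, Complex.cpow_one]
      rw [hys]
      linear_combination (-(1/2 : ℂ) * ((y:ℝ) : ℂ) ^ (s-1)) * hk
    exact hval ▸ hF
  have hconst : ∀ ε ∈ Set.Ioo (0:ℝ) x, D ε = D x := by
    intro ε hε
    have h := intervalIntegral.integral_eq_sub_of_hasDerivAt (f := D)
      (f' := fun _ => (0:ℂ)) (a := ε) (b := x)
      (fun t ht => hD t (by rw [Set.uIcc_of_le hε.2.le] at ht; linarith [ht.1, hε.1]))
      intervalIntegrable_const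
    simp only [intervalIntegral.integral_zero] at h
    exact (sub_eq_zero.mp h.symm).symm
  have hlim : Tendsto D (nhdsWithin 0 (Set.Ioi 0)) (nhds 0) := by
    rw [hDdef]
    have l1 := (tendsto_partialGamma_zero s hs).const_mul (Complex.sin (Real.pi * s))
    rw [mul_zero] at l1
    have a1 : Tendsto (fun ε : ℝ => ((ε:ℝ) : ℂ) ^ s) (nhdsWithin 0 (Set.Ioi 0)) (nhds 0) := by
      apply squeeze_zero_norm' (a := fun ε : ℝ => ε ^ s.re)
      · filter_upwards [self_mem_nhdsWithin] with ε (hε : (0:ℝ) < ε)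
        rw [Complex.norm_cpow_eq_rpow_re_of_pos hε]
      · exact tendsto_rpow_zero s.re hs
    have a2 : Tendsto (fun ε : ℝ => (1/2 : ℂ) * JJ s ε) (nhdsWithin 0 (Set.Ioi 0))
        (nhds ((1/2 : ℂ) * JJ s 0)) :=
      (((hasDerivAt_JJ s 0).continuousAt.tendsto).const_mul _).mono_left nhdsWithin_le_nhds
    have l2 := a1.mul a2
    rw [zero_mul] at l2
    have l3 := l1.sub l2
    rw [sub_zero] at l3
    exact l3
  have hfin : Tendsto (fun _ : ℝ => D x) (nhdsWithin 0 (Set.Ioi 0)) (nhds 0) := by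
    refine hlim.congr' ?_
    filter_upwards [Ioo_mem_nhdsGT_of_mem (Set.left_mem_Ico.mpr hx)] with ε hε
    exact hconst ε hε
  have hDx : D x = 0 := tendsto_nhds_unique tendsto_const_nhds hfin
  have hDx' : Complex.sin ((Real.pi : ℂ) * s) * Complex.partialGamma s x
      - (x:ℂ) ^ s * ((1/2 : ℂ) * JJ s x) = 0 := by
    rw [hDdef] at hDx; exact hDx
  rw [div_mul_eq_mul_div, eq_div_iff hsin]
  linear_combination hDx'
end

section
/- For complex s with Re(s) > 0, real x > 0, and nonzero integer m such that ms is not an integer, (1 - e^{2πims})·γ(s, x) = -i·x^s·∫_0^{2πm} e^{isy}·e^{-x(cos y + i sin y)} dy. -/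
open Complex MeasureTheory intervalIntegral Set Filter

noncomputable def Afun (s : ℂ) (u y : ℝ) : ℂ :=
  Complex.exp (Complex.I * s * y) * Complex.exp (-(u : ℂ) * Complex.exp (Complex.I * y))

lemma Afun_cont (s : ℂ) (u : ℝ) : Continuous (fun y : ℝ => Afun s u y) := by
  unfold Afun; fun_prop

lemma hasDerivAt_A_y (s : ℂ) (u y : ℝ) :
    HasDerivAt (fun y : ℝ => Afun s u y)
      (Complex.I * s * Afun s u y + Complex.I * u * (-(Complex.exp (Complex.I * y)) * Afun s u y))
      y := by
  have h1 := ((hasDerivAt_id ((y : ℝ) : ℂ)).const_mul (Complex.I * s)).cexp.comp_ofReal (z := y)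
  have h2 := ((((hasDerivAt_id ((y : ℝ) : ℂ)).const_mul Complex.I).cexp.const_mul
      (-(u : ℂ))).cexp).comp_ofReal (z := y)
  have := h1.mul h2
  refine HasDerivAt.congr_deriv this ?_
  unfold Afun; simp only [id_eq]; ring

lemma hasDerivAt_A_u (s : ℂ) (y u : ℝ) :
    HasDerivAt (fun v : ℝ => Afun s v y)
      (-(Complex.exp (Complex.I * y)) * Afun s u y) u := by
  have h := ((((hasDerivAt_id ((u : ℝ) : ℂ)).neg.mul_const
      (Complex.exp (Complex.I * y))).cexp).const_mul
      (Complex.exp (Complex.I * s * y))).comp_ofReal (z := u)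
  refine HasDerivAt.congr_deriv h ?_
  unfold Afun; simp only [Pi.neg_apply, id_eq]; ring

lemma key_y (s : ℂ) (c u : ℝ) :
    ∫ y in (0:ℝ)..c, (Complex.I * s * Afun s u y +
        Complex.I * u * (-(Complex.exp (Complex.I * y)) * Afun s u y)) =
      Afun s u c - Afun s u 0 := by
  apply intervalIntegral.integral_eq_sub_of_hasDerivAt
  · exact fun y _ => hasDerivAt_A_y s u y
  · apply Continuous.intervalIntegrable
    have := Afun_cont s u
    fun_prop

lemma abs_le_of_mem_uIoc {c y : ℝ} (hy : y ∈ Set.uIoc 0 c) : |y| ≤ |c| := by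
  rcases le_total 0 c with hc | hc
  · rw [Set.uIoc_of_le hc] at hy
    rw [_root_.abs_of_nonneg (le_of_lt hy.1), _root_.abs_of_nonneg hc]; exact hy.2
  · rw [Set.uIoc_comm, Set.uIoc_of_le hc] at hy
    rw [_root_.abs_of_nonpos hy.2, _root_.abs_of_nonpos hc]; linarith [hy.1]

lemma norm_Afun (s : ℂ) (x y : ℝ) :
    ‖Afun s x y‖ = Real.exp (-s.im * y) * Real.exp (-x * Real.cos y) := by
  unfold Afun
  rw [norm_mul, Complex.norm_exp, Complex.norm_exp]
  congr 2
  · simp [Complex.mul_re, Complex.mul_im]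
  · rw [show Complex.I * (y : ℂ) = (y : ℂ) * Complex.I from mul_comm _ _]
    simp [Complex.mul_re, Complex.exp_ofReal_mul_I_re]

lemma norm_Afun_le (s : ℂ) {M c x y : ℝ} (hy : y ∈ Set.uIoc 0 c) (hx : |x| ≤ M) :
    ‖Afun s x y‖ ≤ Real.exp (|s.im| * |c|) * Real.exp M := by
  rw [norm_Afun]
  have h1 : -s.im * y ≤ |s.im| * |c| := by
    calc -s.im * y ≤ |(-s.im) * y| := le_abs_self _
    _ = |s.im| * |y| := by rw [abs_mul, abs_neg]
    _ ≤ |s.im| * |c| := by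
        exact mul_le_mul_of_nonneg_left (abs_le_of_mem_uIoc hy) (abs_nonneg _)
  have h2 : -x * Real.cos y ≤ M := by
    calc -x * Real.cos y ≤ |(-x) * Real.cos y| := le_abs_self _
    _ = |x| * |Real.cos y| := by rw [abs_mul, abs_neg]
    _ ≤ M * 1 := by
        exact mul_le_mul hx (Real.abs_cos_le_one y) (abs_nonneg _) (le_trans (abs_nonneg _) hx)
    _ = M := mul_one M
  exact mul_le_mul (Real.exp_le_exp.2 h1) (Real.exp_le_exp.2 h2) (Real.exp_pos _).le
    (Real.exp_pos _).le

lemma contA' (s : ℂ) (u : ℝ) :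
    Continuous (fun y : ℝ => -(Complex.exp (Complex.I * y)) * Afun s u y) := by
  have := Afun_cont s u
  fun_prop

lemma J_hasDeriv (s : ℂ) (c u : ℝ) :
    HasDerivAt (fun v : ℝ => ∫ y in (0:ℝ)..c, Afun s v y)
      (∫ y in (0:ℝ)..c, -(Complex.exp (Complex.I * y)) * Afun s u y) u := by
  have H := intervalIntegral.hasDerivAt_integral_of_dominated_loc_of_deriv_le
    (F := fun v y => Afun s v y)
    (F' := fun v y => -(Complex.exp (Complex.I * y)) * Afun s v y) (x₀ := u) (a := 0) (b := c)
    (μ := MeasureTheory.volume)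
    (bound := fun _ => Real.exp (|s.im| * |c|) * Real.exp (|u| + 1)) (s := Metric.ball u 1) (Metric.ball_mem_nhds u one_pos)
    (Filter.Eventually.of_forall fun v => (Afun_cont s v).aestronglyMeasurable)
    ((Afun_cont s u).intervalIntegrable _ _)
    ((contA' s u).aestronglyMeasurable)
    ?_ (intervalIntegrable_const)
    (MeasureTheory.ae_of_all _ fun y _ x _ => hasDerivAt_A_u s y x)
  · exact H.2
  · refine MeasureTheory.ae_of_all _ fun y hy x hx => ?_
    have hxu : |x| ≤ |u| + 1 := by
      have := Metric.mem_ball.mp hx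
      rw [Real.dist_eq] at this
      calc |x| = |u + (x - u)| := by ring_nf
      _ ≤ |u| + |x - u| := abs_add_le _ _
      _ ≤ |u| + 1 := by linarith
    calc ‖-(Complex.exp (Complex.I * y)) * Afun s x y‖
        = ‖Complex.exp (Complex.I * (y : ℂ))‖ * ‖Afun s x y‖ := by rw [norm_mul, norm_neg]
    _ = ‖Afun s x y‖ := by
        simp [Complex.norm_exp]
    _ ≤ _ := norm_Afun_le s hy hxu

lemma pG_hasDeriv (s : ℂ) (hs : 0 < s.re) {u : ℝ} (hu : 0 < u) :
    HasDerivAt (fun v : ℝ => Complex.partialGamma s v)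
      (((Real.exp (-u) : ℝ) : ℂ) * (u : ℂ) ^ (s - 1)) u := by
  have hint : IntervalIntegrable (fun t : ℝ => ((Real.exp (-t) : ℝ) : ℂ) * (t : ℂ) ^ (s - 1))
      MeasureTheory.volume 0 u := by
    rw [intervalIntegrable_iff_integrableOn_Ioc_of_le hu.le]
    exact (Complex.GammaIntegral_convergent hs).mono_set Set.Ioc_subset_Ioi_self
  have hmeas : StronglyMeasurableAtFilter
      (fun t : ℝ => ((Real.exp (-t) : ℝ) : ℂ) * (t : ℂ) ^ (s - 1)) (nhds u) :=
    ⟨Set.Ioi 0, Ioi_mem_nhds hu, (Complex.GammaIntegral_convergent hs).1⟩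
  have hcont : ContinuousAt (fun t : ℝ => ((Real.exp (-t) : ℝ) : ℂ) * (t : ℂ) ^ (s - 1)) u := by
    apply ContinuousAt.mul
    · fun_prop
    · exact (continuousAt_cpow_const (Complex.ofReal_mem_slitPlane.2 hu)).comp
        Complex.continuous_ofReal.continuousAt
  exact intervalIntegral.integral_hasDerivAt_right hint hmeas hcont

lemma cpow_hasDeriv (s : ℂ) {u : ℝ} (hu : 0 < u) :
    HasDerivAt (fun v : ℝ => (v : ℂ) ^ s) (s * (u : ℂ) ^ (s - 1)) u := by
  have := (((hasDerivAt_id ((u : ℝ) : ℂ)).cpow_const (c := s)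
      (by simpa using Complex.ofReal_mem_slitPlane.2 hu)).comp_ofReal (z := u))
  simpa using this

lemma D_hasDeriv (s : ℂ) (hs : 0 < s.re) (c : ℝ) (hc : Complex.exp (Complex.I * c) = 1)
    {u : ℝ} (hu : 0 < u) :
    HasDerivAt (fun v : ℝ => (1 - Complex.exp (Complex.I * s * c)) * Complex.partialGamma s v +
      Complex.I * (v : ℂ) ^ s * ∫ y in (0:ℝ)..c, Afun s v y) 0 u := by
  have hJ := J_hasDeriv s c u
  have hP := (pG_hasDeriv s hs hu).const_mul (1 - Complex.exp (Complex.I * s * c))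
  have hp := (((cpow_hasDeriv s hu).const_mul Complex.I).mul hJ)
  have hD := hP.add hp
  have hsplit : (∫ y in (0:ℝ)..c, (Complex.I * s * Afun s u y +
        Complex.I * u * (-(Complex.exp (Complex.I * y)) * Afun s u y)))
      = Complex.I * s * (∫ y in (0:ℝ)..c, Afun s u y) +
        Complex.I * u * (∫ y in (0:ℝ)..c, -(Complex.exp (Complex.I * y)) * Afun s u y) := by
    rw [intervalIntegral.integral_add (show IntervalIntegrable
        (fun y : ℝ => Complex.I * s * Afun s u y) MeasureTheory.volume 0 c from
        (continuous_const.mul (Afun_cont s u)).intervalIntegrable _ _)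
      (show IntervalIntegrable (fun y : ℝ => Complex.I * u * (-(Complex.exp (Complex.I * y)) *
        Afun s u y)) MeasureTheory.volume 0 c from
        (continuous_const.mul (contA' s u)).intervalIntegrable _ _),
      intervalIntegral.integral_const_mul, intervalIntegral.integral_const_mul]
  have hkey := key_y s c u
  rw [hsplit] at hkey
  have hA0 : Afun s u 0 = Complex.exp (-(u : ℂ)) := by simp [Afun]
  have hAc : Afun s u c = Complex.exp (Complex.I * s * c) * Complex.exp (-(u : ℂ)) := by
    simp [Afun, hc]
  rw [hA0, hAc] at hkey
  have hus : (u : ℂ) ^ s = (u : ℂ) ^ (s - 1) * u := by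
    calc (u : ℂ) ^ s = (u : ℂ) ^ (s - 1 + 1) := by rw [sub_add_cancel]
    _ = (u : ℂ) ^ (s - 1) * (u : ℂ) ^ (1 : ℂ) :=
        Complex.cpow_add _ _ (Complex.ofReal_ne_zero.2 hu.ne')
    _ = (u : ℂ) ^ (s - 1) * u := by rw [Complex.cpow_one]
  refine HasDerivAt.congr_deriv hD ?_
  rw [Complex.ofReal_exp, Complex.ofReal_neg, hus]
  linear_combination ((u : ℂ) ^ (s - 1)) * hkey

lemma pG_tendsto_zero (s : ℂ) (hs : 0 < s.re) :
    Filter.Tendsto (fun a : ℝ => Complex.partialGamma s a) (nhdsWithin 0 (Set.Ioi 0))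
      (nhds 0) := by
  apply squeeze_zero_norm' (a := fun a : ℝ => a ^ s.re / s.re)
  · filter_upwards [self_mem_nhdsWithin] with a (ha : 0 < a)
    have hb : ∀ t ∈ Set.uIoc 0 a, ‖((Real.exp (-t) : ℝ) : ℂ) * (t : ℂ) ^ (s - 1)‖
        ≤ t ^ (s.re - 1) := by
      intro t ht
      rw [Set.uIoc_of_le ha.le] at ht
      rw [norm_mul,
        Complex.norm_cpow_eq_rpow_re_of_pos ht.1, Complex.norm_real, Real.norm_eq_abs,
        _root_.abs_of_nonneg (Real.exp_pos _).le, Complex.sub_re, Complex.one_re]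
      calc Real.exp (-t) * t ^ (s.re - 1) ≤ 1 * t ^ (s.re - 1) := by
            apply mul_le_mul_of_nonneg_right _ (Real.rpow_nonneg ht.1.le _)
            exact Real.exp_le_one_iff.2 (by linarith [ht.1])
      _ = t ^ (s.re - 1) := one_mul _
    have hgint : IntervalIntegrable (fun t : ℝ => t ^ (s.re - 1)) MeasureTheory.volume 0 a :=
      intervalIntegral.intervalIntegrable_rpow' (by linarith)
    have := intervalIntegral.norm_integral_le_abs_of_norm_le
      (f := fun t : ℝ => ((Real.exp (-t) : ℝ) : ℂ) * (t : ℂ) ^ (s - 1))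
      (MeasureTheory.ae_restrict_of_forall_mem measurableSet_uIoc hb) hgint
    rw [Complex.partialGamma]
    refine this.trans ?_
    rw [integral_rpow (Or.inl (by linarith)), sub_add_cancel,
      Real.zero_rpow hs.ne', sub_zero]
    rw [abs_div, _root_.abs_of_nonneg (Real.rpow_nonneg ha.le _),
      _root_.abs_of_nonneg hs.le]
  · have h0 := (Real.continuousAt_rpow_const 0 s.re (Or.inr hs.le)).tendsto
    rw [Real.zero_rpow hs.ne'] at h0
    have h1 : Filter.Tendsto (fun a : ℝ => a ^ s.re) (nhdsWithin 0 (Set.Ioi 0)) (nhds 0) :=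
      h0.mono_left nhdsWithin_le_nhds
    simpa using h1.div_const s.re

lemma Rpart_tendsto_zero (s : ℂ) (hs : 0 < s.re) (c : ℝ) :
    Filter.Tendsto (fun a : ℝ => Complex.I * (a : ℂ) ^ s * ∫ y in (0:ℝ)..c, Afun s a y)
      (nhdsWithin 0 (Set.Ioi 0)) (nhds 0) := by
  set C : ℝ := Real.exp (|s.im| * |c|) * Real.exp 1 with hC
  apply squeeze_zero_norm' (a := fun a : ℝ => a ^ s.re * (C * |c - 0|))
  · filter_upwards [Ioo_mem_nhdsGT_of_mem (by norm_num : (0:ℝ) ∈ Set.Ico 0 1)]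
      with a ha
    obtain ⟨ha0, ha1⟩ := ha
    have hJ : ‖∫ y in (0:ℝ)..c, Afun s a y‖ ≤ C * |c - 0| := by
      apply intervalIntegral.norm_integral_le_of_norm_le_const
      intro y hy
      exact norm_Afun_le s hy (by rw [_root_.abs_of_nonneg ha0.le]; linarith)
    calc ‖Complex.I * (a : ℂ) ^ s * ∫ y in (0:ℝ)..c, Afun s a y‖
        = ‖(a : ℂ) ^ s‖ * ‖∫ y in (0:ℝ)..c, Afun s a y‖ := by
          rw [norm_mul, norm_mul, Complex.norm_I, one_mul]
    _ ≤ a ^ s.re * (C * |c - 0|) := by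
        rw [Complex.norm_cpow_eq_rpow_re_of_pos ha0]
        exact mul_le_mul_of_nonneg_left hJ (Real.rpow_nonneg ha0.le _)
  · have h0 := (Real.continuousAt_rpow_const 0 s.re (Or.inr hs.le)).tendsto
    rw [Real.zero_rpow hs.ne'] at h0
    have h1 : Filter.Tendsto (fun a : ℝ => a ^ s.re) (nhdsWithin 0 (Set.Ioi 0)) (nhds 0) :=
      h0.mono_left nhdsWithin_le_nhds
    simpa using h1.mul_const (C * |c - 0|)

theorem stmt_15 (s : ℂ) (hs : 0 < s.re) (x : ℝ) (hx : 0 < x) (m : ℤ) (hm : m ≠ 0)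
    (hms : ∀ k : ℤ, (m : ℂ) * s ≠ k) :
    (1 - Complex.exp (2 * Real.pi * Complex.I * m * s)) * Complex.partialGamma s x =
      -Complex.I * (x : ℂ) ^ s *
        ∫ y in (0:ℝ)..(2 * Real.pi * m),
          Complex.exp (Complex.I * s * y) *
            Complex.exp (-(x : ℂ) * (Real.cos y + Complex.I * Real.sin y)) := by
  set c : ℝ := 2 * Real.pi * (m : ℝ) with hcdef
  have hc : Complex.exp (Complex.I * (c : ℂ)) = 1 := by
    rw [show Complex.I * (c : ℂ) = (m : ℂ) * (2 * Real.pi * Complex.I) by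
      rw [hcdef]; push_cast; ring]
    exact Complex.exp_int_mul_two_pi_mul_I m
  have hcs : Complex.exp (Complex.I * s * (c : ℂ)) =
      Complex.exp (2 * Real.pi * Complex.I * m * s) := by
    congr 1; rw [hcdef]; push_cast; ring
  set D : ℝ → ℂ := fun v => (1 - Complex.exp (Complex.I * s * c)) * Complex.partialGamma s v +
      Complex.I * (v : ℂ) ^ s * ∫ y in (0:ℝ)..c, Afun s v y with hD
  have hconst : ∀ a ∈ Set.Ioo (0:ℝ) x, D x = D a := by
    intro a ha
    have h := intervalIntegral.integral_eq_sub_of_hasDerivAt (f := D)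
      (f' := fun _ => (0 : ℂ)) (a := a) (b := x) ?_ intervalIntegrable_const
    · simp only [intervalIntegral.integral_const, smul_zero] at h
      exact (sub_eq_zero.mp h.symm)
    · intro u hu
      rw [Set.uIcc_of_le ha.2.le] at hu
      exact D_hasDeriv s hs c hc (lt_of_lt_of_le ha.1 hu.1)
  have hlim : Filter.Tendsto D (nhdsWithin 0 (Set.Ioi 0)) (nhds 0) := by
    have := (Filter.Tendsto.const_mul (1 - Complex.exp (Complex.I * s * c))
      (pG_tendsto_zero s hs)).add (Rpart_tendsto_zero s hs c)
    simpa using this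
  have hx0 : D x = 0 := by
    have h2 : Filter.Tendsto D (nhdsWithin 0 (Set.Ioi 0)) (nhds (D x)) := by
      apply Filter.Tendsto.congr' _ tendsto_const_nhds
      filter_upwards [Ioo_mem_nhdsGT_of_mem (Set.left_mem_Ico.2 hx)] with a ha
      exact hconst a ha
    exact tendsto_nhds_unique h2 hlim
  have hint : (∫ y in (0:ℝ)..c, Complex.exp (Complex.I * s * y) *
        Complex.exp (-(x : ℂ) * ((Real.cos y : ℂ) + Complex.I * (Real.sin y : ℂ))))
      = ∫ y in (0:ℝ)..c, Afun s x y := by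
    apply intervalIntegral.integral_congr
    intro y _
    have hcy : ((Real.cos y : ℂ) + Complex.I * (Real.sin y : ℂ))
        = Complex.exp (Complex.I * (y : ℂ)) := by
      rw [mul_comm Complex.I ((y : ℂ)), Complex.exp_mul_I, Complex.ofReal_cos,
        Complex.ofReal_sin]
      ring
    show Complex.exp (Complex.I * s * y) *
        Complex.exp (-(x : ℂ) * ((Real.cos y : ℂ) + Complex.I * (Real.sin y : ℂ)))
      = Afun s x y
    rw [hcy]
    rfl
  rw [hint, ← hcs]
  simp only [hD] at hx0
  linear_combination hx0
end

section
/- For complex x, y with Re(x) > 0, Re(y) > 0, and x not an integer, the beta function satisfies (1 - e^{2πix})·B(x, y) = -i·∫_0^{2π} e^{ixθ}·(1 - cos θ - i sin θ)^{y-1} dθ. -/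
open Complex MeasureTheory Set Real Filter intervalIntegral

namespace Stmt18

noncomputable def e (θ : ℝ) : ℂ := Complex.exp (θ * Complex.I)

lemma abs_e (θ : ℝ) : ‖e θ‖ = 1 := Complex.norm_exp_ofReal_mul_I θ

lemma e_re (θ : ℝ) : (e θ).re = Real.cos θ := Complex.exp_ofReal_mul_I_re θ

lemma e_im (θ : ℝ) : (e θ).im = Real.sin θ := Complex.exp_ofReal_mul_I_im θ

lemma re_one_sub_smul_e (t θ : ℝ) : (1 - (t:ℂ) * e θ).re = 1 - t * Real.cos θ := by
  simp [Complex.sub_re, Complex.mul_re, e_re, e_im]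

lemma re_pos_one_sub_smul_e {t θ : ℝ} (ht0 : 0 ≤ t) (ht1 : t < 1) :
    0 < (1 - (t:ℂ) * e θ).re := by
  rw [re_one_sub_smul_e]
  nlinarith [Real.cos_le_one θ, Real.neg_one_le_cos θ]

lemma abs_le_two_one_sub_smul_e {t θ : ℝ} (ht0 : 0 ≤ t) (ht1 : t ≤ 1) :
    ‖1 - (t:ℂ) * e θ‖ ≤ 2 := by
  calc ‖1 - (t:ℂ) * e θ‖ ≤ ‖(1:ℂ)‖ + ‖(t:ℂ) * e θ‖ :=
        norm_sub_le _ _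
    _ ≤ 2 := by
        rw [norm_mul, abs_e, norm_one, Complex.norm_real, mul_one, Real.norm_eq_abs, _root_.abs_of_nonneg ht0]
        linarith

lemma one_sub_le_abs_one_sub_smul_e {t θ : ℝ} (ht0 : 0 ≤ t) :
    1 - t ≤ ‖1 - (t:ℂ) * e θ‖ := by
  calc (1:ℝ) - t ≤ 1 - t * Real.cos θ := by nlinarith [Real.cos_le_one θ]
    _ = (1 - (t:ℂ) * e θ).re := (re_one_sub_smul_e t θ).symm
    _ ≤ ‖_‖ := Complex.re_le_norm _

lemma norm_cpow_le {w : ℂ} (hw : w ≠ 0) (z : ℂ) :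
    ‖w ^ z‖ ≤ ‖w‖ ^ z.re * Real.exp (Real.pi * |z.im|) := by
  rw [Complex.norm_cpow_of_ne_zero hw]
  rw [div_eq_mul_inv, ← Real.exp_neg]
  have h1 : |w.arg * z.im| ≤ Real.pi * |z.im| := by
    rw [abs_mul]
    exact mul_le_mul_of_nonneg_right (Complex.abs_arg_le_pi w) (abs_nonneg _)
  have h2 : Real.exp (-(w.arg * z.im)) ≤ Real.exp (Real.pi * |z.im|) :=
    Real.exp_le_exp.mpr (le_trans (neg_le_abs _) h1)
  exact mul_le_mul_of_nonneg_left h2 (Real.rpow_nonneg (norm_nonneg w) _)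

lemma abs_rpow_between {w : ℂ} {m : ℝ} (hm : 0 < m) (h1 : m ≤ ‖w‖)
    (h2 : ‖w‖ ≤ 2) (s : ℝ) : ‖w‖ ^ s ≤ m ^ s + 2 ^ s := by
  rcases le_or_gt s 0 with hs | hs
  · have := Real.rpow_le_rpow_of_nonpos hm h1 hs
    have h2s : (0:ℝ) ≤ 2 ^ s := Real.rpow_nonneg (by norm_num) s
    linarith
  · have := Real.rpow_le_rpow (norm_nonneg w) h2 hs.le
    have hms : (0:ℝ) ≤ m ^ s := Real.rpow_nonneg hm.le s
    linarith

lemma norm_cpow_between {w : ℂ} {m : ℝ} (hm : 0 < m) (h1 : m ≤ ‖w‖)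
    (h2 : ‖w‖ ≤ 2) (z : ℂ) :
    ‖w ^ z‖ ≤ (m ^ z.re + 2 ^ z.re) * Real.exp (Real.pi * |z.im|) := by
  have hw : w ≠ 0 := by
    intro h; rw [h, norm_zero] at h1; linarith
  refine (norm_cpow_le hw z).trans ?_
  have := abs_rpow_between hm h1 h2 z.re
  exact mul_le_mul_of_nonneg_right this (Real.exp_nonneg _)

lemma sin_lower {u : ℝ} (h0 : 0 ≤ u) (h1 : u ≤ Real.pi / 2) : 2 / 5 * u ≤ Real.sin u := by
  rcases eq_or_lt_of_le h0 with rfl | h0'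
  · simp
  rcases le_or_gt u 1 with hu | hu
  · have := Real.sin_gt_sub_cube h0'
    have hcube : u ^ 3 ≤ u := by nlinarith [sq_nonneg u, mul_le_one₀ hu h0 hu]
    linarith
  · have hs1 : Real.sin 1 ≤ Real.sin u := by
      rcases eq_or_lt_of_le hu.le with h | h
      · rw [h]
      · exact (Real.sin_lt_sin_of_lt_of_le_pi_div_two (by linarith [Real.pi_pos]) h1 h).le
    have h2 : 1 - 1 ^ 3 / 4 < Real.sin 1 := by have := Real.sin_gt_sub_cube one_pos; linarith
    have hpi : Real.pi < 3.15 := Real.pi_lt_d2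
    nlinarith

lemma abs_one_sub_e (θ : ℝ) : ‖1 - e θ‖ = 2 * |Real.sin (θ / 2)| := by
  have h : Complex.normSq (1 - e θ) = 2 - 2 * Real.cos θ := by
    rw [Complex.normSq_apply]
    simp only [Complex.sub_re, Complex.sub_im, Complex.one_re, Complex.one_im]
    rw [e_re, e_im]
    nlinarith [Real.sin_sq_add_cos_sq θ]
  have h2 : 2 - 2 * Real.cos θ = (2 * |Real.sin (θ / 2)|) ^ 2 := by
    rw [Real.abs_sin_half, mul_pow,
      Real.sq_sqrt (by nlinarith [Real.cos_le_one θ] : (0:ℝ) ≤ (1 - Real.cos θ) / 2)]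
    ring
  rw [Complex.norm_def, h, h2, Real.sqrt_sq (by positivity)]

lemma abs_one_sub_e_lower {θ : ℝ} (h0 : 0 ≤ θ) (h1 : θ ≤ 2 * Real.pi) :
    θ * (2 * Real.pi - θ) / (5 * Real.pi) ≤ ‖1 - e θ‖ := by
  have hpi := Real.pi_pos
  rw [abs_one_sub_e]
  rcases le_or_gt θ Real.pi with hc | hc
  · have hs : 2 / 5 * (θ / 2) ≤ Real.sin (θ / 2) := sin_lower (by linarith) (by linarith)
    have habs : Real.sin (θ / 2) ≤ |Real.sin (θ / 2)| := le_abs_self _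
    rw [div_le_iff₀ (by positivity)]
    nlinarith
  · have hs : 2 / 5 * ((2 * Real.pi - θ) / 2) ≤ Real.sin ((2 * Real.pi - θ) / 2) :=
      sin_lower (by linarith) (by linarith)
    have hrw : Real.sin ((2 * Real.pi - θ) / 2) = Real.sin (θ / 2) := by
      rw [show (2 * Real.pi - θ) / 2 = Real.pi - θ / 2 by ring, Real.sin_pi_sub]
    rw [hrw] at hs
    have habs : Real.sin (θ / 2) ≤ |Real.sin (θ / 2)| := le_abs_self _
    rw [div_le_iff₀ (by positivity)]
    nlinarith

lemma re_pos_of_cos_lt {t θ : ℝ} (ht0 : 0 ≤ t) (ht1 : t ≤ 1) (hθ : Real.cos θ < 1) :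
    0 < 1 - t * Real.cos θ := by
  nlinarith [Real.neg_one_le_cos θ]

lemma cos_lt_one_of_mem {θ : ℝ} (h0 : 0 < θ) (h1 : θ < 2 * Real.pi) : Real.cos θ < 1 := by
  rcases lt_or_eq_of_le (Real.cos_le_one θ) with h | h
  · exact h
  · exfalso
    have := (Real.cos_eq_one_iff_of_lt_of_lt (by linarith) (by linarith)).mp h
    linarith

lemma ae_ne_vol (c : ℝ) : ∀ᵐ t : ℝ ∂volume, t ≠ c := by
  have h : {a : ℝ | ¬ a ≠ c} = {c} := by ext a; simp
  rw [ae_iff, h]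
  exact measure_singleton c

/-- a.e. avoidance of a point -/
lemma ae_ne (s : Set ℝ) (c : ℝ) : ∀ᵐ t ∂(volume.restrict s), t ≠ c :=
  ae_restrict_of_ae (ae_ne_vol c)

lemma real_beta_integrable {a b : ℝ} (ha : 0 < a) (hb : 0 < b) :
    IntervalIntegrable (fun t => t ^ (a - 1) * (1 - t) ^ (b - 1) : ℝ → ℝ) volume 0 1 := by
  have h := (Complex.betaIntegral_convergent (u := (a:ℂ)) (v := (b:ℂ))
    (by simpa using ha) (by simpa using hb)).norm
  rw [intervalIntegrable_iff, uIoc_of_le zero_le_one] at h ⊢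
  apply h.congr
  filter_upwards [ae_restrict_mem measurableSet_Ioc, ae_ne (Ioc (0:ℝ) 1) 1] with t ht ht1
  have ht0 : 0 < t := ht.1
  have ht1' : t < 1 := lt_of_le_of_ne ht.2 ht1
  rw [norm_mul]
  rw [show ((a:ℂ) - 1) = ((a - 1 : ℝ) : ℂ) by push_cast; ring,
    show ((b:ℂ) - 1) = ((b - 1 : ℝ) : ℂ) by push_cast; ring,
    show (1 - (t:ℂ)) = ((1 - t : ℝ) : ℂ) by push_cast; ring]
  rw [Complex.norm_cpow_eq_rpow_re_of_pos ht0, Complex.norm_cpow_eq_rpow_re_of_pos (by linarith)]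
  simp

section
variable (x y : ℂ)

noncomputable def F (θ t : ℝ) : ℂ := (t:ℂ) ^ (x-1) * (1 - (t:ℂ) * e θ) ^ (y-1)

noncomputable def f (θ : ℝ) : ℂ := ∫ t in (0:ℝ)..1, F x y θ t

noncomputable def F' (θ t : ℝ) : ℂ :=
  (t:ℂ) ^ (x-1) * ((y-1) * (1 - (t:ℂ) * e θ) ^ (y-2) * (-(t:ℂ) * Complex.I * e θ))

noncomputable def I2 (θ : ℝ) : ℂ := ∫ t in (0:ℝ)..1, (t:ℂ) ^ x * (1 - (t:ℂ) * e θ) ^ (y-2)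

/-- dominating function for `F` -/
noncomputable def Bt (t : ℝ) : ℝ :=
  (t ^ (x.re - 1) * (1 - t) ^ (y.re - 1) + t ^ (x.re - 1) * 2 ^ (y.re - 1)) *
    Real.exp (Real.pi * |y.im|)

end

variable {x y : ℂ}

lemma F_measurable (θ : ℝ) : Measurable (F x y θ) := by
  apply Measurable.mul
  · exact Complex.measurable_ofReal.pow measurable_const
  · exact (measurable_const.sub (Complex.measurable_ofReal.mul_const (e θ))).pow measurable_const

lemma Bt_integrable (hx : 0 < x.re) (hy : 0 < y.re) :
    IntervalIntegrable (Bt x y) volume 0 1 := by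
  apply IntervalIntegrable.mul_const
  exact (real_beta_integrable hx hy).add
    ((intervalIntegral.intervalIntegrable_rpow' (by linarith)).mul_const _)

lemma F_norm_le (hy : 0 < y.re) {t : ℝ} (ht : t ∈ Ioo (0:ℝ) 1) (θ : ℝ) :
    ‖F x y θ t‖ ≤ Bt x y t := by
  have h1 : ‖(t:ℂ) ^ (x-1)‖ = t ^ (x.re - 1) := by
    rw [Complex.norm_cpow_eq_rpow_re_of_pos ht.1, Complex.sub_re,
      Complex.one_re]
  have h2 : ‖(1 - (t:ℂ) * e θ) ^ (y-1)‖ ≤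
      ((1 - t) ^ (y.re - 1) + 2 ^ (y.re - 1)) * Real.exp (Real.pi * |y.im|) := by
    have := norm_cpow_between (by linarith [ht.2] : (0:ℝ) < 1 - t)
      (one_sub_le_abs_one_sub_smul_e (θ := θ) ht.1.le)
      (abs_le_two_one_sub_smul_e ht.1.le ht.2.le) (y - 1)
    simpa using this
  calc ‖F x y θ t‖ = t ^ (x.re - 1) * ‖(1 - (t:ℂ) * e θ) ^ (y-1)‖ := by
        rw [F, norm_mul, h1]
    _ ≤ t ^ (x.re - 1) * (((1 - t) ^ (y.re - 1) + 2 ^ (y.re - 1)) * Real.exp (Real.pi * |y.im|)) :=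
        mul_le_mul_of_nonneg_left h2 (Real.rpow_nonneg ht.1.le _)
    _ = Bt x y t := by rw [Bt]; ring

lemma F_integrable (hx : 0 < x.re) (hy : 0 < y.re) (θ : ℝ) :
    IntervalIntegrable (F x y θ) volume 0 1 := by
  rw [intervalIntegrable_iff, uIoc_of_le zero_le_one]
  have hB := Bt_integrable hx hy
  rw [intervalIntegrable_iff, uIoc_of_le zero_le_one] at hB
  apply hB.mono' (F_measurable θ).aestronglyMeasurable
  filter_upwards [ae_restrict_mem measurableSet_Ioc, ae_ne (Ioc (0:ℝ) 1) 1] with t ht ht1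
  exact F_norm_le hy ⟨ht.1, lt_of_le_of_ne ht.2 ht1⟩ θ

lemma one_sub_smul_e_cont (t : ℝ) : Continuous fun θ : ℝ => 1 - (t:ℂ) * e θ := by
  apply continuous_const.sub
  apply continuous_const.mul
  exact Complex.continuous_exp.comp (Complex.continuous_ofReal.mul continuous_const)

lemma f_continuous (hx : 0 < x.re) (hy : 0 < y.re) : Continuous (f x y) := by
  apply intervalIntegral.continuous_of_dominated_interval
    (bound := Bt x y) (fun θ => (F_measurable θ).aestronglyMeasurable)
  · intro θ
    filter_upwards [ae_ne_vol 1] with t ht1 ht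
    rw [uIoc_of_le zero_le_one] at ht
    exact F_norm_le hy ⟨ht.1, lt_of_le_of_ne ht.2 ht1⟩ θ
  · exact Bt_integrable hx hy
  · filter_upwards [ae_ne_vol 1] with t ht1 ht
    rw [uIoc_of_le zero_le_one] at ht
    have htI : t ∈ Ioo (0:ℝ) 1 := ⟨ht.1, lt_of_le_of_ne ht.2 ht1⟩
    apply continuous_const.mul
    rw [continuous_iff_continuousAt]
    intro θ
    apply ContinuousAt.cpow (one_sub_smul_e_cont t).continuousAt continuousAt_const
    exact Or.inl (re_pos_one_sub_smul_e htI.1.le htI.2)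

lemma F'_measurable (θ : ℝ) : Measurable (F' x y θ) := by
  apply Measurable.mul
  · exact Complex.measurable_ofReal.pow measurable_const
  · apply Measurable.mul
    · apply Measurable.mul measurable_const
      exact (measurable_const.sub (Complex.measurable_ofReal.mul_const (e θ))).pow
        measurable_const
    · exact (Complex.measurable_ofReal.neg.mul_const Complex.I).mul_const (e θ)

lemma F_hasDerivAt_theta {t : ℝ} (ht : t ∈ Ioo (0:ℝ) 1) (θ : ℝ) :
    HasDerivAt (fun θ : ℝ => F x y θ t) (F' x y θ t) θ := by
  have hre : 0 < (1 - (t:ℂ) * e θ).re := re_pos_one_sub_smul_e ht.1.le ht.2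
  have hz : HasDerivAt (fun z : ℂ => Complex.exp (z * Complex.I))
      (Complex.exp ((θ:ℂ) * Complex.I) * (1 * Complex.I)) (θ:ℂ) :=
    (Complex.hasDerivAt_exp _).comp _ ((hasDerivAt_id _).mul_const _)
  have hinner : HasDerivAt (fun z : ℂ => 1 - (t:ℂ) * Complex.exp (z * Complex.I))
      (-((t:ℂ) * (Complex.exp ((θ:ℂ) * Complex.I) * (1 * Complex.I)))) (θ:ℂ) :=
    (hz.const_mul _).const_sub 1
  have houter := (hinner.cpow_const (c := y - 1) (Or.inl hre)).comp_ofReal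
  have hmul := houter.const_mul ((t:ℂ) ^ (x-1))
  convert hmul using 1
  · rfl
  · rfl
  rw [F', e, show y - 2 = y - 1 - 1 by ring]
  ring

lemma f_hasDerivAt (hx : 0 < x.re) (hy : 0 < y.re) {θ₀ : ℝ} (h0 : 0 < θ₀)
    (h1 : θ₀ < 2 * Real.pi) :
    HasDerivAt (f x y) (∫ t in (0:ℝ)..1, F' x y θ₀ t) θ₀ := by
  have hpi := Real.pi_pos
  set ε := min θ₀ (2 * Real.pi - θ₀) / 2 with hεdef
  have hε0 : 0 < ε := by
    apply div_pos (lt_min h0 (by linarith)) (by norm_num)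
  have hεle1 : ε ≤ θ₀ / 2 := by
    rw [hεdef]
    have := min_le_left θ₀ (2 * Real.pi - θ₀)
    linarith
  have hεle2 : ε ≤ (2 * Real.pi - θ₀) / 2 := by
    rw [hεdef]
    have := min_le_right θ₀ (2 * Real.pi - θ₀)
    linarith
  have hKsub : Icc (θ₀ - ε) (θ₀ + ε) ⊆ Ioo 0 (2 * Real.pi) := by
    intro u hu
    exact ⟨by linarith [hu.1], by linarith [hu.2]⟩
  obtain ⟨θs, hθsK, hmin⟩ := (isCompact_Icc (a := θ₀ - ε) (b := θ₀ + ε)).exists_isMinOn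
    (nonempty_Icc.mpr (by linarith))
    (((continuous_const.sub Real.continuous_cos).div_const 2).continuousOn :
      ContinuousOn (fun u : ℝ => (1 - Real.cos u) / 2) _)
  set m := (1 - Real.cos θs) / 2 with hmdef
  have hm : 0 < m := by
    have := cos_lt_one_of_mem (hKsub hθsK).1 (hKsub hθsK).2
    rw [hmdef]; linarith
  have hlow : ∀ θ ∈ Icc (θ₀ - ε) (θ₀ + ε), ∀ t ∈ Icc (0:ℝ) 1,
      m ≤ ‖1 - (t:ℂ) * e θ‖ := by
    intro θ hθ t ht
    have hA : m ≤ (1 - Real.cos θ) / 2 := hmin hθ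
    have hB : (1 - Real.cos θ) / 2 ≤ 1 - t * Real.cos θ := by
      nlinarith [Real.neg_one_le_cos θ, Real.cos_le_one θ,
        mul_nonneg ht.1 (sub_nonneg.mpr (Real.cos_le_one θ)),
        mul_nonneg (sub_nonneg.mpr ht.2)
          (by nlinarith [Real.neg_one_le_cos θ] : (0:ℝ) ≤ 1 + Real.cos θ)]
    calc m ≤ 1 - t * Real.cos θ := by linarith
      _ = (1 - (t:ℂ) * e θ).re := (re_one_sub_smul_e t θ).symm
      _ ≤ ‖_‖ := Complex.re_le_norm _
  set M : ℝ := (m ^ (y.re - 2) + 2 ^ (y.re - 2)) * Real.exp (Real.pi * |y.im|) with hMdef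
  have hM0 : 0 ≤ M := by
    rw [hMdef]
    have := Real.rpow_nonneg hm.le (y.re - 2)
    have := Real.rpow_nonneg (by norm_num : (0:ℝ) ≤ 2) (y.re - 2)
    positivity
  have key := intervalIntegral.hasDerivAt_integral_of_dominated_loc_of_deriv_le
    (F := F x y) (F' := F' x y) (x₀ := θ₀)
    (bound := fun t => t ^ (x.re - 1) * (‖y - 1‖ * M)) (Metric.ball_mem_nhds θ₀ hε0)
    (Eventually.of_forall fun θ => (F_measurable θ).aestronglyMeasurable)
    (F_integrable hx hy θ₀)
    ((F'_measurable θ₀).aestronglyMeasurable)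
    ?_ ?_ ?_
  · exact key.2
  · -- the bound
    filter_upwards [ae_ne_vol 1] with t ht1 ht
    rw [uIoc_of_le zero_le_one] at ht
    have htI : t ∈ Ioo (0:ℝ) 1 := ⟨ht.1, lt_of_le_of_ne ht.2 ht1⟩
    intro θ hθ
    have hθK : θ ∈ Icc (θ₀ - ε) (θ₀ + ε) := by
      rw [Metric.mem_ball, Real.dist_eq, abs_lt] at hθ
      exact ⟨by linarith [hθ.1], by linarith [hθ.2]⟩
    have hBnorm : ‖(1 - (t:ℂ) * e θ) ^ (y-2)‖ ≤ M := by
      have := norm_cpow_between hm (hlow θ hθK t ⟨htI.1.le, htI.2.le⟩)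
        (abs_le_two_one_sub_smul_e htI.1.le htI.2.le) (y - 2)
      rw [hMdef]
      simpa using this
    have hCnorm : ‖-(t:ℂ) * Complex.I * e θ‖ = t := by
      rw [norm_mul, norm_mul, abs_e, Complex.norm_I,
        show -(t:ℂ) = ((-t : ℝ) : ℂ) by push_cast; ring, Complex.norm_real, Real.norm_eq_abs, abs_neg,
        _root_.abs_of_nonneg htI.1.le]
      ring
    have hAnorm : ‖(t:ℂ) ^ (x-1)‖ = t ^ (x.re - 1) := by
      rw [Complex.norm_cpow_eq_rpow_re_of_pos htI.1, Complex.sub_re,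
        Complex.one_re]
    calc ‖F' x y θ t‖ = ‖(t:ℂ) ^ (x-1)‖ * (‖y - 1‖ * ‖(1 - (t:ℂ) * e θ) ^ (y-2)‖ *
          ‖-(t:ℂ) * Complex.I * e θ‖) := by
          rw [F', norm_mul, norm_mul, norm_mul]
      _ ≤ t ^ (x.re - 1) * (‖y - 1‖ * M * 1) := by
          rw [hAnorm, hCnorm]
          apply mul_le_mul_of_nonneg_left _ (Real.rpow_nonneg htI.1.le _)
          apply mul_le_mul (mul_le_mul_of_nonneg_left hBnorm (norm_nonneg _)) htI.2.le htI.1.le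
          positivity
      _ = t ^ (x.re - 1) * (‖y - 1‖ * M) := by ring
  · exact (intervalIntegral.intervalIntegrable_rpow' (by linarith)).mul_const _
  · filter_upwards [ae_ne_vol 1] with t ht1 ht
    rw [uIoc_of_le zero_le_one] at ht
    have htI : t ∈ Ioo (0:ℝ) 1 := ⟨ht.1, lt_of_le_of_ne ht.2 ht1⟩
    intro θ _
    exact F_hasDerivAt_theta htI θ

lemma cont_aux (hθ : Real.cos θ < 1) {w : ℂ} (hw : 0 < w.re) (z : ℂ) :
    ContinuousOn (fun t : ℝ => (t:ℂ) ^ w * (1 - (t:ℂ) * e θ) ^ z) (Icc 0 1) := by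
  apply continuousOn_of_forall_continuousAt
  intro t ht
  apply ContinuousAt.mul
  · exact Complex.continuousAt_ofReal_cpow_const t w (Or.inl hw)
  · apply ContinuousAt.cpow _ continuousAt_const
    · exact Or.inl (by rw [re_one_sub_smul_e]; exact re_pos_of_cos_lt ht.1 ht.2 hθ)
    · exact (continuous_const.sub (Complex.continuous_ofReal.mul continuous_const)).continuousAt

lemma ibp (hx : 0 < x.re) (hy : 0 < y.re) {θ : ℝ} (h0 : 0 < θ) (h1 : θ < 2 * Real.pi) :
    (1 - e θ) ^ (y-1) = x * f x y θ - (y-1) * e θ * I2 x y θ := by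
  have hθcos := cos_lt_one_of_mem h0 h1
  set G : ℝ → ℂ := fun t => (t:ℂ) ^ x * (1 - (t:ℂ) * e θ) ^ (y-1) with hG
  have hx0 : x ≠ 0 := by intro h; rw [h] at hx; simp at hx
  have hc : ContinuousOn G (Icc 0 1) := cont_aux hθcos hx (y-1)
  have hder : ∀ t ∈ Ioo (0:ℝ) 1, HasDerivAt G
      (x * F x y θ t - (y-1) * e θ * ((t:ℂ) ^ x * (1 - (t:ℂ) * e θ) ^ (y-2))) t := by
    intro t ht
    have hre : 0 < (1 - (t:ℂ) * e θ).re := re_pos_one_sub_smul_e ht.1.le ht.2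
    have U : HasDerivAt (fun w : ℂ => w ^ x) (x * (t:ℂ) ^ (x-1) * 1) (t:ℂ) :=
      (hasDerivAt_id _).cpow_const (Or.inl (by simpa using ht.1))
    have U' := U.comp_ofReal
    have Vin : HasDerivAt (fun z : ℂ => 1 - z * e θ) (-(1 * e θ)) (t:ℂ) :=
      ((hasDerivAt_id _).mul_const _).const_sub 1
    have V := (Vin.cpow_const (c := y-1) (Or.inl hre)).comp_ofReal
    have hUV := U'.mul V
    convert hUV using 1
    · rfl
    · rfl
    rw [F, show y - 2 = y - 1 - 1 by ring]
    ring
  have hint2 : IntervalIntegrable (fun t => (t:ℂ) ^ x * (1 - (t:ℂ) * e θ) ^ (y-2))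
      volume 0 1 := by
    apply ContinuousOn.intervalIntegrable
    rw [uIcc_of_le zero_le_one]
    exact cont_aux hθcos hx (y-2)
  have hint1 := (F_integrable hx hy θ).const_mul x
  have h_int := hint1.sub (hint2.const_mul ((y-1) * e θ))
  have int_ev := intervalIntegral.integral_eq_sub_of_hasDerivAt_of_le zero_le_one hc hder h_int
  have hG1 : G 1 = (1 - e θ) ^ (y-1) := by
    rw [hG]
    push_cast
    rw [Complex.one_cpow, one_mul, one_mul]
  have hG0 : G 0 = 0 := by
    rw [hG]
    push_cast
    rw [Complex.zero_cpow hx0, zero_mul]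
  rw [intervalIntegral.integral_sub hint1 (hint2.const_mul _),
    intervalIntegral.integral_const_mul, intervalIntegral.integral_const_mul, hG1, hG0,
    sub_zero] at int_ev
  rw [f, I2]
  linear_combination -int_ev

lemma F'_integral_eq (hx : 0 < x.re) (hy : 0 < y.re) {θ : ℝ} (h0 : 0 < θ)
    (h1 : θ < 2 * Real.pi) :
    (∫ t in (0:ℝ)..1, F' x y θ t) = -Complex.I * e θ * (y-1) * I2 x y θ := by
  have hx0 : x ≠ 0 := by intro h; rw [h] at hx; simp at hx
  have hcongr : ∀ t ∈ uIcc (0:ℝ) 1, F' x y θ t =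
      (-Complex.I * e θ * (y-1)) * ((t:ℂ) ^ x * (1 - (t:ℂ) * e θ) ^ (y-2)) := by
    intro t ht
    rw [uIcc_of_le zero_le_one] at ht
    rcases eq_or_lt_of_le ht.1 with rfl | htpos
    · rw [F']
      push_cast
      rw [Complex.zero_cpow hx0]
      ring
    · have htne : (t:ℂ) ≠ 0 := Complex.ofReal_ne_zero.mpr (ne_of_gt htpos)
      rw [F', show x = x - 1 + 1 by ring, Complex.cpow_add _ _ htne, Complex.cpow_one,
        show x - 1 + 1 - 1 = x - 1 by ring]
      ring
  rw [intervalIntegral.integral_congr hcongr, intervalIntegral.integral_const_mul, I2]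

lemma abs_one_sub_e_le_two (θ : ℝ) : ‖1 - e θ‖ ≤ 2 := by
  calc ‖1 - e θ‖ ≤ ‖(1:ℂ)‖ + ‖e θ‖ := norm_sub_le _ _
    _ = 2 := by rw [norm_one, abs_e]; norm_num

lemma G'_integrable (hx : 0 < x.re) (hy : 0 < y.re) : IntervalIntegrable
    (fun θ : ℝ => Complex.I * (Complex.exp (Complex.I * x * θ) * (1 - e θ) ^ (y-1)))
    volume 0 (2 * Real.pi) := by
  have hpi := Real.pi_pos
  set s : ℝ := y.re - 1 with hsdef
  set E : ℝ := Real.exp (2 * Real.pi * |x.im|) * Real.exp (Real.pi * |y.im|) with hEdef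
  have hE0 : 0 ≤ E := by rw [hEdef]; positivity
  set cb : ℝ → ℝ := fun θ =>
    ((θ * (1 / (2 * Real.pi))) ^ s * (1 - θ * (1 / (2 * Real.pi))) ^ s) *
      ((4 * Real.pi / 5) ^ s * E) + 2 ^ s * E with hcbdef
  have hcb_int : IntervalIntegrable cb volume 0 (2 * Real.pi) := by
    have hb0 := real_beta_integrable hy hy
    have hb1 := hb0.comp_mul_right (c := 1 / (2 * Real.pi))
    rw [show (0:ℝ) / (1 / (2 * Real.pi)) = 0 by ring,
      show (1:ℝ) / (1 / (2 * Real.pi)) = 2 * Real.pi by field_simp] at hb1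
    exact (hb1.mul_const _).add intervalIntegrable_const
  have hmeas : Measurable
      (fun θ : ℝ => Complex.I * (Complex.exp (Complex.I * x * θ) * (1 - e θ) ^ (y-1))) := by
    apply measurable_const.mul
    apply Measurable.mul
    · exact (Complex.continuous_exp.comp
        (continuous_const.mul Complex.continuous_ofReal)).measurable
    · apply Measurable.pow _ measurable_const
      exact (continuous_const.sub
        (Complex.continuous_exp.comp (Complex.continuous_ofReal.mul continuous_const))).measurable
  rw [intervalIntegrable_iff, uIoc_of_le (by positivity)] at hcb_int ⊢
  apply hcb_int.mono' hmeas.aestronglyMeasurable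
  filter_upwards [ae_restrict_mem measurableSet_Ioc, ae_ne (Ioc 0 (2 * Real.pi)) (2 * Real.pi)]
    with θ hθ hθ2
  have hθI : θ ∈ Ioo 0 (2 * Real.pi) := ⟨hθ.1, lt_of_le_of_ne hθ.2 hθ2⟩
  set mθ : ℝ := θ * (2 * Real.pi - θ) / (5 * Real.pi) with hmθdef
  have hmθ0 : 0 < mθ := by
    rw [hmθdef]
    have := hθI.1; have := hθI.2
    apply div_pos (by nlinarith) (by positivity)
  have hexp_le : ‖Complex.exp (Complex.I * x * θ)‖ ≤ Real.exp (2 * Real.pi * |x.im|) := by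
    rw [Complex.norm_exp]
    apply Real.exp_le_exp.mpr
    have hre : (Complex.I * x * (θ:ℂ)).re = -x.im * θ := by
      simp [Complex.mul_re, Complex.mul_im]
    rw [hre]
    nlinarith [neg_abs_le x.im, abs_nonneg x.im, hθI.1.le, hθI.2.le]
  have hpow_le : ‖(1 - e θ) ^ (y-1)‖ ≤ (mθ ^ s + 2 ^ s) * Real.exp (Real.pi * |y.im|) := by
    have := norm_cpow_between hmθ0 (abs_one_sub_e_lower hθI.1.le hθI.2.le)
      (abs_one_sub_e_le_two θ) (y - 1)
    simpa using this
  have hsplit : mθ ^ s = (4 * Real.pi / 5) ^ s *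
      ((θ * (1 / (2 * Real.pi))) ^ s * (1 - θ * (1 / (2 * Real.pi))) ^ s) := by
    have hfact : mθ = (4 * Real.pi / 5) *
        ((θ * (1 / (2 * Real.pi))) * (1 - θ * (1 / (2 * Real.pi)))) := by
      rw [hmθdef]; field_simp; ring
    rw [hfact, Real.mul_rpow (by positivity)
        (by
          apply mul_nonneg
          · exact mul_nonneg hθI.1.le (by positivity)
          · have := hθI.2.le
            have h2 : θ * (1 / (2 * Real.pi)) ≤ 1 := by
              rw [mul_one_div, div_le_one (by positivity)]
              exact hθI.2.le
            linarith),
      Real.mul_rpow (mul_nonneg hθI.1.le (by positivity))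
        (by
          have h2 : θ * (1 / (2 * Real.pi)) ≤ 1 := by
            rw [mul_one_div, div_le_one (by positivity)]
            exact hθI.2.le
          linarith)]
  calc ‖Complex.I * (Complex.exp (Complex.I * x * θ) * (1 - e θ) ^ (y-1))‖
      = ‖Complex.exp (Complex.I * x * θ)‖ * ‖(1 - e θ) ^ (y-1)‖ := by
        rw [norm_mul, norm_mul, Complex.norm_I, one_mul]
    _ ≤ Real.exp (2 * Real.pi * |x.im|) *
        ((mθ ^ s + 2 ^ s) * Real.exp (Real.pi * |y.im|)) :=
        mul_le_mul hexp_le hpow_le (norm_nonneg _) (Real.exp_nonneg _)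
    _ = cb θ := by rw [hcbdef, hEdef, hsplit]; ring

lemma g_hasDerivAt (hx : 0 < x.re) (hy : 0 < y.re) {θ : ℝ} (h0 : 0 < θ)
    (h1 : θ < 2 * Real.pi) :
    HasDerivAt (fun θ : ℝ => Complex.exp (Complex.I * x * θ) * f x y θ)
      (Complex.I * (Complex.exp (Complex.I * x * θ) * (1 - e θ) ^ (y-1))) θ := by
  have hf := f_hasDerivAt (x := x) (y := y) hx hy h0 h1
  have hval : (∫ t in (0:ℝ)..1, F' x y θ t)
      = Complex.I * ((1 - e θ) ^ (y-1) - x * f x y θ) := by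
    rw [F'_integral_eq hx hy h0 h1]
    linear_combination (-Complex.I) * (ibp hx hy h0 h1)
  rw [hval] at hf
  have hexp : HasDerivAt (fun θ : ℝ => Complex.exp (Complex.I * x * θ))
      (Complex.I * x * Complex.exp (Complex.I * x * θ)) θ := by
    have h1 : HasDerivAt (fun z : ℂ => Complex.exp (Complex.I * x * z))
        (Complex.I * x * Complex.exp (Complex.I * x * θ)) (θ:ℂ) := by
      have h2 : HasDerivAt (fun z : ℂ => Complex.exp (Complex.I * x * z))
          (Complex.exp (Complex.I * x * θ) * (Complex.I * x * 1)) (θ:ℂ) :=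
        (Complex.hasDerivAt_exp _).comp _ ((hasDerivAt_id _).const_mul _)
      convert h2 using 1
      ring
    exact h1.comp_ofReal
  have := hexp.mul hf
  convert this using 1
  · rfl
  · rfl
  ring

lemma key (hx : 0 < x.re) (hy : 0 < y.re) :
    Complex.exp (Complex.I * x * (2 * Real.pi)) * Complex.betaIntegral x y
      - Complex.betaIntegral x y =
    ∫ θ in (0:ℝ)..(2 * Real.pi),
      Complex.I * (Complex.exp (Complex.I * x * θ) * (1 - e θ) ^ (y-1)) := by
  have hpi := Real.pi_pos
  have hcont : ContinuousOn (fun θ : ℝ => Complex.exp (Complex.I * x * θ) * f x y θ)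
      (Icc 0 (2 * Real.pi)) := by
    apply Continuous.continuousOn
    exact (Complex.continuous_exp.comp (by continuity)).mul (f_continuous hx hy)
  have hderiv : ∀ θ ∈ Ioo (0:ℝ) (2 * Real.pi),
      HasDerivWithinAt (fun θ : ℝ => Complex.exp (Complex.I * x * θ) * f x y θ)
        (Complex.I * (Complex.exp (Complex.I * x * θ) * (1 - e θ) ^ (y-1))) (Ioi θ) θ :=
    fun θ hθ => (g_hasDerivAt hx hy hθ.1 hθ.2).hasDerivWithinAt
  have hFTC := intervalIntegral.integral_eq_sub_of_hasDeriv_right_of_le (by positivity)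
    hcont hderiv (G'_integrable hx hy)
  rw [hFTC]
  have he2 : e (2 * Real.pi) = e 0 := by
    rw [e, e]
    push_cast
    rw [Complex.exp_two_pi_mul_I]
    norm_num
  have hf2 : f x y (2 * Real.pi) = f x y 0 := by
    unfold f F
    rw [he2]
  have hf0 : f x y 0 = Complex.betaIntegral x y := by
    unfold f F Complex.betaIntegral
    apply intervalIntegral.integral_congr
    intro t _
    rw [e]
    norm_num
  rw [hf2, hf0]
  norm_num

end Stmt18

open Stmt18 in
theorem stmt_18 (x y : ℂ) (hx : 0 < x.re) (hy : 0 < y.re) (hxi : ∀ n : ℤ, x ≠ n) :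
    (1 - Complex.exp (2 * Real.pi * Complex.I * x)) * Complex.betaIntegral x y =
      -Complex.I *
        ∫ θ in (0:ℝ)..(2 * Real.pi),
          Complex.exp (Complex.I * x * θ) *
            ((1 : ℂ) - Real.cos θ - Complex.I * Real.sin θ) ^ (y - 1) := by
  have hint : ∀ θ : ℝ, Complex.exp (Complex.I * x * θ) *
      ((1 : ℂ) - Real.cos θ - Complex.I * Real.sin θ) ^ (y - 1)
      = Complex.exp (Complex.I * x * θ) * (1 - e θ) ^ (y-1) := by
    intro θ
    congr 2
    rw [e, Complex.exp_mul_I, ← Complex.ofReal_cos, ← Complex.ofReal_sin]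
    ring
  have hk := key (x := x) (y := y) hx hy
  rw [intervalIntegral.integral_const_mul] at hk
  have hexp : Complex.exp (2 * Real.pi * Complex.I * x)
      = Complex.exp (Complex.I * x * (2 * Real.pi)) := by ring_nf
  calc (1 - Complex.exp (2 * Real.pi * Complex.I * x)) * Complex.betaIntegral x y
      = -Complex.I * (Complex.I *
        ((1 - Complex.exp (2 * Real.pi * Complex.I * x)) * Complex.betaIntegral x y)) := by
        rw [← mul_assoc]; norm_num [Complex.I_mul_I]
    _ = -Complex.I * ∫ θ in (0:ℝ)..(2 * Real.pi),
          Complex.exp (Complex.I * x * θ) *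
            ((1 : ℂ) - Real.cos θ - Complex.I * Real.sin θ) ^ (y - 1) := by
        rw [intervalIntegral.integral_congr (fun θ _ => hint θ), hexp]
        linear_combination (-1 : ℂ) * hk -
          (1 - Complex.exp (Complex.I * x * (2 * Real.pi))) * Complex.betaIntegral x y *
            Complex.I_sq
end
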